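/- Product basis used in the proof of Theorem 4. With the field tower of the context, for each e = 1,…,n̄ define the finite set E_e = {β_e^j α_e^{u(j+t s̄)} : 0 ≤ j ≤ s̄−1, 0 ≤ t ≤ (p_e−1)/s̄ − 1} ∪ {α_e^{u(p_e−1)} · ∑_{j=0}^{s̄−1} β_e^j} ⊆ K. Then the set { (∏_{e=1}^{n̄} ξ_e) · (∏_{e=1}^{n̄} α_e^{u w_e}) : ξ_e ∈ E_e and 0 ≤ w_e ≤ s̄ − 1 for each e } is an F-basis of K = K_{n̄} (in particular its s̄^{n̄} ∏_e p_e listed elements are pairwise distinct and F-linearly independent). -/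

import Mathlib

open Finset

section Framework
variable {F Ω : Type*} [Field F] [Field Ω] [Algebra F Ω]

/-- linear independence with coefficients in a subfield, raw form -/
def LIf (A : IntermediateField F Ω) {ι : Type*} [Fintype ι] (v : ι → Ω) : Prop :=
  ∀ c : ι → Ω, (∀ i, c i ∈ A) → ∑ i, c i * v i = 0 → ∀ i, c i = 0

/-- spanning with coefficients in a subfield, raw form -/
def SPf (A B : IntermediateField F Ω) {ι : Type*} [Fintype ι] (v : ι → Ω) : Prop :=
  ∀ x ∈ B, ∃ c : ι → Ω, (∀ i, c i ∈ A) ∧ x = ∑ i, c i * v i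

lemma LIf_comp_equiv {ι κ : Type*} [Fintype ι] [Fintype κ] {A : IntermediateField F Ω}
    {v : κ → Ω} (h : LIf A v) (E : ι ≃ κ) : LIf A (v ∘ E) := by
  intro c hc hsum i
  have h2 : ∑ k : κ, (c ∘ E.symm) k * v k = 0 := by
    rw [← Equiv.sum_comp E (fun k => (c ∘ E.symm) k * v k)]
    simpa using hsum
  have := h (c ∘ E.symm) (fun k => hc _) h2 (E i)
  simpa using this

lemma SPf_comp_equiv {ι κ : Type*} [Fintype ι] [Fintype κ] {A B : IntermediateField F Ω}
    {v : κ → Ω} (h : SPf A B v) (E : ι ≃ κ) : SPf A B (v ∘ E) := by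
  intro x hx
  obtain ⟨c, hc, hxe⟩ := h x hx
  refine ⟨c ∘ E, fun i => hc _, ?_⟩
  rw [hxe, ← Equiv.sum_comp E (fun k => c k * v k)]
  rfl

lemma LIf_SPf_tower {ι κ : Type*} [Fintype ι] [Fintype κ]
    (A B C : IntermediateField F Ω) (hAB : A ≤ B)
    (v : ι → Ω) (w : κ → Ω) (hv : ∀ i, v i ∈ B)
    (hvLI : LIf A v) (hvSP : SPf A B v) (hwLI : LIf B w) (hwSP : SPf B C w) :
    LIf A (fun q : ι × κ => v q.1 * w q.2) ∧ SPf A C (fun q : ι × κ => v q.1 * w q.2) := by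
  constructor
  · intro c hc hsum q
    have hre : ∑ k : κ, (∑ i : ι, c (i, k) * v i) * w k = 0 := by
      rw [← hsum, Fintype.sum_prod_type_right]
      refine Finset.sum_congr rfl fun k _ => ?_
      rw [Finset.sum_mul]
      exact Finset.sum_congr rfl fun i _ => by ring
    have hinner : ∀ k, (∑ i : ι, c (i, k) * v i) = 0 := by
      apply hwLI _ (fun k => sum_mem fun i _ => mul_mem (hAB (hc _)) (hv i)) hre
    have := fun k => hvLI (fun i => c (i, k)) (fun i => hc _) (hinner k)
    exact this q.2 q.1
  · intro x hx
    obtain ⟨e, he, hxe⟩ := hwSP x hx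
    choose dd hdd hde using fun k => hvSP (e k) (he k)
    refine ⟨fun q => dd q.2 q.1, fun q => hdd _ _, ?_⟩
    rw [hxe, Fintype.sum_prod_type_right]
    refine Finset.sum_congr rfl fun k _ => ?_
    rw [hde k, Finset.sum_mul]
    exact Finset.sum_congr rfl fun i _ => by ring

end Framework
section Chain
variable {F Ω : Type*} [Field F] [Field Ω] [Algebra F Ω]

lemma chain_mono (K : ℕ → IntermediateField F Ω) (n : ℕ) (h : ∀ e < n, K e ≤ K (e + 1)) :
    ∀ b ≤ n, ∀ a ≤ b, K a ≤ K b := by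
  intro b
  induction b with
  | zero => intro _ a ha; rw [Nat.le_zero.1 ha]
  | succ m IH =>
    intro hm a ha
    rcases Nat.lt_or_ge a (m + 1) with h' | h'
    · exact le_trans (IH (by omega) a (by omega)) (h m (by omega))
    · have : a = m + 1 := by omega
      rw [this]

lemma LIf_SPf_chain (n : ℕ) (I : ℕ → Type) [∀ e, Fintype (I e)] (g : (e : ℕ) → I e → Ω)
    (K : ℕ → IntermediateField F Ω)
    (hmono : ∀ e < n, K e ≤ K (e + 1))
    (hLI : ∀ e < n, LIf (K e) (g (e + 1)))
    (hSP : ∀ e < n, SPf (K e) (K (e + 1)) (g (e + 1)))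
    (hmem : ∀ e < n, ∀ i, g (e + 1) i ∈ K (e + 1)) :
    LIf (K 0) (fun f : (e : Fin n) → I (e.1 + 1) => ∏ e, g (e.1 + 1) (f e)) ∧
    SPf (K 0) (K n) (fun f : (e : Fin n) → I (e.1 + 1) => ∏ e, g (e.1 + 1) (f e)) := by
  induction n with
  | zero =>
    constructor
    · intro c hc hsum i
      have hi : i = default := Subsingleton.elim _ _
      rw [Fintype.sum_unique] at hsum
      simpa [hi] using hsum
    · intro x hx
      exact ⟨fun _ => x, fun _ => hx, by rw [Fintype.sum_unique]; simp⟩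
  | succ n IH =>
    obtain ⟨ihLI, ihSP⟩ := IH (fun e he => hmono e (by omega)) (fun e he => hLI e (by omega))
      (fun e he => hSP e (by omega)) (fun e he => hmem e (by omega))
    have hK0n : K 0 ≤ K n := chain_mono K (n+1) hmono n (by omega) 0 (by omega)
    have hvmem : ∀ f : (e : Fin n) → I (e.1 + 1), (∏ e, g (e.1 + 1) (f e)) ∈ K n := by
      intro f
      apply prod_mem
      intro e _
      exact chain_mono K (n+1) hmono n (by omega) (e.1 + 1) (by omega) (hmem e.1 (by omega) (f e))
    let E : ((e : Fin (n+1)) → I (e.1 + 1)) ≃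
        (((e : Fin n) → I (e.1 + 1)) × I (n + 1)) :=
      { toFun := fun f => (fun e => f e.castSucc, f (Fin.last n))
        invFun := fun q => Fin.snoc q.1 q.2
        left_inv := fun f => by
          funext e
          refine Fin.lastCases ?_ ?_ e
          · exact Fin.snoc_last _ _
          · intro i; exact Fin.snoc_castSucc _ _ i
        right_inv := fun q => by
          ext e
          · simp
          · simp }
    have hfac : (fun f : (e : Fin (n+1)) → I (e.1 + 1) => ∏ e, g (e.1 + 1) (f e)) =
        (fun q : ((e : Fin n) → I (e.1 + 1)) × I (n + 1) =>
          (∏ e : Fin n, g (e.1 + 1) (q.1 e)) * g (n + 1) q.2) ∘ E := by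
      funext f
      simp only [Function.comp_apply]
      rw [Fin.prod_univ_castSucc]
      rfl
    obtain ⟨tLI, tSP⟩ := LIf_SPf_tower (K 0) (K n) (K (n+1)) hK0n
      (fun f : (e : Fin n) → I (e.1 + 1) => ∏ e, g (e.1 + 1) (f e)) (g (n+1))
      hvmem ihLI ihSP (hLI n (by omega)) (hSP n (by omega))
    rw [hfac]
    exact ⟨LIf_comp_equiv tLI E, SPf_comp_equiv tSP E⟩

end Chain
def encDT (s d P : ℕ) (hs : 0 < s) (hds : s * d = P - 1) (k : ℕ) (hk : k < P - 1) :
    Fin d × Fin s :=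
  (⟨k / s, by
    by_contra h
    push_neg at h
    have h2 : d * s ≤ k / s * s := Nat.mul_le_mul_right s h
    have h3 : k / s * s ≤ k := Nat.div_mul_le_self k s
    have h4 : d * s = P - 1 := by rw [← hds]; ring
    omega⟩,
   ⟨k % s, Nat.mod_lt _ hs⟩)

def stepFam {Ω : Type*} [Field Ω] (P s u : ℕ) (a b : Ω) :
    Option (Fin s × Fin ((P - 1) / s)) × Fin s → Ω :=
  fun ξw => (ξw.1.elim (a ^ (u * (P - 1)) * ∑ j ∈ Finset.range s, b ^ j)
      (fun jt => b ^ (jt.1.1 : ℕ) * a ^ (u * (jt.1.1 + jt.2.1 * s)))) * a ^ (u * (ξw.2.1 : ℕ))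

section Step
variable {F Ω : Type*} [Field F] [Field Ω] [Algebra F Ω]

lemma step_basis (A Fe Ke : IntermediateField F Ω) (P s u : ℕ) (hP : 2 ≤ P) (hs : 1 ≤ s)
    (hsP : s ∣ P - 1) (hu : 0 < u)
    (a b : Ω) (ha : a ∈ Fe) (hb : b ∈ Ke) (hAF : A ≤ Fe) (hFK : Fe ≤ Ke)
    (hαLI : ∀ c : Fin P → Ω, (∀ i, c i ∈ A) → ∑ i, c i * a ^ (u * i.1) = 0 → ∀ i, c i = 0)
    (hαSP : ∀ x ∈ Fe, ∃ c : Fin P → Ω, (∀ i, c i ∈ A) ∧ x = ∑ i, c i * a ^ (u * i.1))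
    (hβLI : ∀ c : Fin s → Ω, (∀ i, c i ∈ Fe) → ∑ i, c i * b ^ i.1 = 0 → ∀ i, c i = 0)
    (hβSP : ∀ x ∈ Ke, ∃ c : Fin s → Ω, (∀ i, c i ∈ Fe) ∧ x = ∑ i, c i * b ^ i.1) :
    LIf A (stepFam P s u a b) ∧ SPf A Ke (stepFam P s u a b) := by
  have hs0 : 0 < s := hs
  set d := (P - 1) / s with hd
  have hds : s * d = P - 1 := Nat.mul_div_cancel' hsP
  have hsle : s ≤ P - 1 := Nat.le_of_dvd (by omega) hsP
  have anz : a ≠ 0 := by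
    intro h0
    have h1 := hαLI (fun i => if i = ⟨1, by omega⟩ then 1 else 0)
      (fun i => by split
                   · exact one_mem A
                   · exact zero_mem A)
      (by
        rw [Finset.sum_eq_single (⟨1, by omega⟩ : Fin P)]
        · simp [h0, zero_pow, hu.ne']
        · intro b _ hb; simp [hb]
        · simp)
      ⟨1, by omega⟩
    simp at h1
  have apne : ∀ m : ℕ, a ^ (u * m) ≠ 0 := fun m => pow_ne_zero _ anz
  have apmem : ∀ m : ℕ, a ^ (u * m) ∈ Fe := fun m => pow_mem ha _
  have αLI' : ∀ (w : ℕ) (c : ℕ → Ω), (∀ k, c k ∈ A) →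
      ∑ k ∈ Finset.range P, c k * a ^ (u * (w + k)) = 0 → ∀ k < P, c k = 0 := by
    intro w c hc hsum k hk
    have key : (∑ k ∈ Finset.range P, c k * a ^ (u * k)) * a ^ (u * w) = 0 := by
      rw [Finset.sum_mul, ← hsum]
      refine Finset.sum_congr rfl fun k _ => ?_
      rw [mul_assoc, ← pow_add]
      congr 1
      ring
    have h0 : ∑ k ∈ Finset.range P, c k * a ^ (u * k) = 0 := by
      rcases mul_eq_zero.1 key with h | h
      · exact h
      · exact absurd h (apne w)
    have h1 : ∑ i : Fin P, c i.1 * a ^ (u * i.1) = 0 := by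
      rw [Fin.sum_univ_eq_sum_range (fun k => c k * a ^ (u * k)) P]; exact h0
    exact hαLI (fun i => c i.1) (fun i => hc _) h1 ⟨k, hk⟩
  have αSP' : ∀ (w : ℕ), ∀ x ∈ Fe, ∃ c : ℕ → Ω, (∀ k, c k ∈ A) ∧
      x = ∑ k ∈ Finset.range P, c k * a ^ (u * (w + k)) := by
    intro w x hx
    obtain ⟨c, hc, hxe⟩ := hαSP (x * (a ^ (u * w))⁻¹) (mul_mem hx (inv_mem (apmem w)))
    refine ⟨fun k => if h : k < P then c ⟨k, h⟩ else 0,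
      fun k => by dsimp only; split
                  · exact hc _
                  · exact zero_mem A, ?_⟩
    rw [← Fin.sum_univ_eq_sum_range
      (fun k => (if h : k < P then c ⟨k, h⟩ else 0) * a ^ (u * (w + k))) P]
    calc x = (x * (a ^ (u * w))⁻¹) * a ^ (u * w) := by field_simp
      _ = (∑ i : Fin P, c i * a ^ (u * i.1)) * a ^ (u * w) := by rw [← hxe]
      _ = ∑ i : Fin P, (if h : i.1 < P then c ⟨i.1, h⟩ else 0) * a ^ (u * (w + i.1)) := by
          rw [Finset.sum_mul]
          refine Finset.sum_congr rfl fun i _ => ?_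
          rw [dif_pos i.2, Fin.eta, mul_assoc, ← pow_add]
          congr 1
          ring
  -- the span over A of the family
  set V : Submodule ↥A Ω := Submodule.span ↥A (Set.range (stepFam P s u a b)) with hV
  have Vsmul : ∀ (c x : Ω), c ∈ A → x ∈ V → c * x ∈ V := by
    intro c x hc hx
    have h2 : (⟨c, hc⟩ : ↥A) • x = c * x := by rw [Algebra.smul_def]; rfl
    rw [← h2]
    exact V.smul_mem _ hx
  have hmemV : ∀ ξw, stepFam P s u a b ξw ∈ V :=
    fun ξw => Submodule.subset_span (Set.mem_range_self _)
  -- G1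
  have G1 : ∀ j < s, ∀ k < P - 1, b ^ j * a ^ (u * (j + k)) ∈ V := by
    intro j hj k hk
    have := hmemV (some (⟨j, hj⟩, (encDT s d P hs0 hds k hk).1), (encDT s d P hs0 hds k hk).2)
    have heq : stepFam P s u a b
        (some (⟨j, hj⟩, (encDT s d P hs0 hds k hk).1), (encDT s d P hs0 hds k hk).2)
        = b ^ j * a ^ (u * (j + k)) := by
      show b ^ j * a ^ (u * (j + k / s * s)) * a ^ (u * (k % s)) = _
      have h5 : k / s * s + k % s = k := Nat.div_add_mod' k s
      rw [mul_assoc, ← pow_add]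
      congr 1
      conv_rhs => rw [← h5]
      ring
    rwa [heq] at this
  -- G2
  have G2 : ∀ w < s, (∑ j ∈ Finset.range s, b ^ j * a ^ (u * (P - 1 + w))) ∈ V := by
    intro w hw
    have := hmemV (none, ⟨w, hw⟩)
    have heq : stepFam P s u a b (none, ⟨w, hw⟩)
        = ∑ j ∈ Finset.range s, b ^ j * a ^ (u * (P - 1 + w)) := by
      show a ^ (u * (P - 1)) * (∑ j ∈ Finset.range s, b ^ j) * a ^ (u * w) = _
      rw [Finset.mul_sum, Finset.sum_mul]
      refine Finset.sum_congr rfl fun j _ => ?_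
      rw [show u * (P - 1 + w) = u * (P - 1) + u * w from by ring, pow_add]
      ring
    rwa [heq] at this
  -- key spanning induction
  have keyW : ∀ w, w < s → ∀ x ∈ Fe, b ^ w * x ∈ V := by
    intro w
    induction w using Nat.strong_induction_on with
    | _ w IH =>
      intro hw x hx
      have h2 : b ^ w * a ^ (u * (P - 1 + w)) ∈ V := by
        have hall := G2 w hw
        have hsplit : b ^ w * a ^ (u * (P - 1 + w)) =
            (∑ j ∈ Finset.range s, b ^ j * a ^ (u * (P - 1 + w))) -
            ∑ j ∈ (Finset.range s).erase w, b ^ j * a ^ (u * (P - 1 + w)) := by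
          rw [← Finset.sum_erase_add _ _ (Finset.mem_range.2 hw)]
          ring
        rw [hsplit]
        refine Submodule.sub_mem V hall (Submodule.sum_mem V fun j hj => ?_)
        have hj1 : j ≠ w := (Finset.mem_erase.1 hj).1
        have hj2 : j < s := Finset.mem_range.1 (Finset.mem_erase.1 hj).2
        rcases Nat.lt_or_ge j w with h | h
        · exact IH j h (by omega) _ (apmem _)
        · have hjw : w < j := by omega
          have := G1 j hj2 (P - 1 + w - j) (by omega)
          have he : u * (j + (P - 1 + w - j)) = u * (P - 1 + w) := by
            congr 1
            omega
          rwa [he] at this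
      have h3 : ∀ k < P, b ^ w * a ^ (u * (w + k)) ∈ V := by
        intro k hk
        rcases Nat.lt_or_ge k (P - 1) with h | h
        · exact G1 w hw k h
        · have hk1 : k = P - 1 := by omega
          subst hk1
          have he : u * (w + (P - 1)) = u * (P - 1 + w) := by congr 1; omega
          rw [he]
          exact h2
      obtain ⟨c, hc, hxe⟩ := αSP' w x hx
      rw [hxe, Finset.mul_sum]
      refine Submodule.sum_mem V fun k hk => ?_
      have := Vsmul (c k) _ (hc k) (h3 k (Finset.mem_range.1 hk))
      have he : b ^ w * (c k * a ^ (u * (w + k))) = c k * (b ^ w * a ^ (u * (w + k))) := by ring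
      rwa [he]
  -- spanning
  have hSP : SPf A Ke (stepFam P s u a b) := by
    intro x hxK
    obtain ⟨C, hC, hxe⟩ := hβSP x hxK
    have hxV : x ∈ V := by
      rw [hxe]
      refine Submodule.sum_mem V fun j _ => ?_
      have := keyW j.1 j.2 (C j) (hC j)
      have he : C j * b ^ j.1 = b ^ j.1 * C j := by ring
      rwa [he]
    obtain ⟨c, hcx⟩ := (Submodule.mem_span_range_iff_exists_fun ↥A).1 hxV
    refine ⟨fun i => (c i : Ω), fun i => (c i).2, ?_⟩
    simp only [Algebra.smul_def, IntermediateField.algebraMap_apply] at hcx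
    exact hcx.symm
  -- independence
  have hbound : ∀ (t : Fin d) (w' : Fin s), t.1 * s + w'.1 < P - 1 := by
    intro t w'
    have h1 : (t.1 + 1) * s ≤ d * s := Nat.mul_le_mul_right s t.2
    have h2 : d * s = P - 1 := by rw [mul_comm]; exact hds
    have h3 : (t.1 + 1) * s = t.1 * s + s := by ring
    have h4 := w'.2
    omega
  have encEq : ∀ (t : Fin d) (w' : Fin s) (h : t.1 * s + w'.1 < P - 1),
      encDT s d P hs0 hds (t.1 * s + w'.1) h = (t, w') := by
    intro t w' h
    have hdiv : (t.1 * s + w'.1) / s = t.1 := by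
      rw [show t.1 * s + w'.1 = s * t.1 + w'.1 from by ring, Nat.mul_add_div hs0,
        Nat.div_eq_of_lt w'.2]
      omega
    have hmod : (t.1 * s + w'.1) % s = w'.1 := by
      rw [show t.1 * s + w'.1 = s * t.1 + w'.1 from by ring, Nat.mul_add_mod,
        Nat.mod_eq_of_lt w'.2]
    refine Prod.ext ?_ ?_
    · exact Fin.ext hdiv
    · exact Fin.ext hmod
  have hLI : LIf A (stepFam P s u a b) := by
    intro c hc hsum
    set dd : ℕ → Ω := fun w => if h : w < s then c (none, ⟨w, h⟩) else 0 with hdddef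
    have hddmem : ∀ w, dd w ∈ A := by
      intro w
      rw [hdddef]
      dsimp only
      split
      · exact hc _
      · exact zero_mem A
    have noneEq : ∀ w : Fin s, dd w.1 = c (none, w) := by
      intro w
      rw [hdddef]
      dsimp only
      rw [dif_pos w.2]
    set Cf : Fin s → Ω := fun j =>
      (∑ tw : Fin d × Fin s, c (some (j, tw.1), tw.2) *
        a ^ (u * (j.1 + (tw.1.1 * s + tw.2.1)))) +
      ∑ w : Fin s, c (none, w) * a ^ (u * (P - 1 + w.1)) with hCf
    have hgroup : ∑ j : Fin s, Cf j * b ^ j.1 = 0 := by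
      rw [← hsum]
      have e1 : ∑ ξw : Option (Fin s × Fin d) × Fin s, c ξw * stepFam P s u a b ξw
          = (∑ w : Fin s, c (none, w) * stepFam P s u a b (none, w)) +
            ∑ jt : Fin s × Fin d, ∑ w : Fin s, c (some jt, w) * stepFam P s u a b (some jt, w) := by
        rw [Fintype.sum_prod_type]
        exact Fintype.sum_option (fun ξ => ∑ w : Fin s, c (ξ, w) * stepFam P s u a b (ξ, w))
      rw [e1]
      have e2 : ∀ w : Fin s, c (none, w) * stepFam P s u a b (none, w)
          = ∑ j : Fin s, c (none, w) * (b ^ j.1 * a ^ (u * (P - 1 + w.1))) := by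
        intro w
        show c (none, w) * (a ^ (u * (P - 1)) * (∑ j ∈ Finset.range s, b ^ j) * a ^ (u * w.1)) = _
        rw [← Fin.sum_univ_eq_sum_range (fun j => b ^ j) s, Finset.mul_sum, Finset.sum_mul,
          Finset.mul_sum]
        refine Finset.sum_congr rfl fun j _ => ?_
        rw [show u * (P - 1 + w.1) = u * (P - 1) + u * w.1 from by ring, pow_add]
        ring
      have e3 : ∀ (jt : Fin s × Fin d) (w : Fin s),
          c (some jt, w) * stepFam P s u a b (some jt, w)
          = c (some jt, w) * (b ^ jt.1.1 * a ^ (u * (jt.1.1 + (jt.2.1 * s + w.1)))) := by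
        intro jt w
        show c (some jt, w) * (b ^ jt.1.1 * a ^ (u * (jt.1.1 + jt.2.1 * s)) * a ^ (u * w.1)) = _
        rw [show u * (jt.1.1 + (jt.2.1 * s + w.1)) = u * (jt.1.1 + jt.2.1 * s) + u * w.1 from
          by ring, pow_add]
        ring
      simp only [e2, e3, hCf]
      calc ∑ j : Fin s, ((∑ tw : Fin d × Fin s, c (some (j, tw.1), tw.2) *
              a ^ (u * (j.1 + (tw.1.1 * s + tw.2.1)))) +
            ∑ w : Fin s, c (none, w) * a ^ (u * (P - 1 + w.1))) * b ^ j.1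
          = (∑ j : Fin s, ∑ tw : Fin d × Fin s, c (some (j, tw.1), tw.2) *
              (b ^ j.1 * a ^ (u * (j.1 + (tw.1.1 * s + tw.2.1))))) +
            ∑ j : Fin s, ∑ w : Fin s, c (none, w) * (b ^ j.1 * a ^ (u * (P - 1 + w.1))) := by
            rw [← Finset.sum_add_distrib]
            refine Finset.sum_congr rfl fun j _ => ?_
            rw [add_mul, Finset.sum_mul, Finset.sum_mul]
            congr 1
            · exact Finset.sum_congr rfl fun tw _ => by ring
            · exact Finset.sum_congr rfl fun w _ => by ring
        _ = (∑ w : Fin s, ∑ j : Fin s, c (none, w) * (b ^ j.1 * a ^ (u * (P - 1 + w.1)))) +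
            ∑ jt : Fin s × Fin d, ∑ w : Fin s, c (some jt, w) *
              (b ^ jt.1.1 * a ^ (u * (jt.1.1 + (jt.2.1 * s + w.1)))) := by
            rw [add_comm]
            congr 1
            · exact Finset.sum_comm
            · rw [Fintype.sum_prod_type (fun jt : Fin s × Fin d => ∑ w : Fin s, c (some jt, w) *
                (b ^ jt.1.1 * a ^ (u * (jt.1.1 + (jt.2.1 * s + w.1)))))]
              refine Finset.sum_congr rfl fun j _ => ?_
              exact Fintype.sum_prod_type _
    have hCmem : ∀ j, Cf j ∈ Fe := by
      intro j
      rw [hCf]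
      exact add_mem (sum_mem fun tw _ => mul_mem (hAF (hc _)) (apmem _))
        (sum_mem fun w _ => mul_mem (hAF (hc _)) (apmem _))
    have hCzero : ∀ j, Cf j = 0 := hβLI Cf hCmem hgroup
    have part1 : ∀ (jv : ℕ) (cc : Fin d × Fin s → Ω),
        (∑ k ∈ Finset.range P,
          (if h : k < P - 1 then cc (encDT s d P hs0 hds k h) else 0) * a ^ (u * (jv + k)))
        = ∑ tw : Fin d × Fin s, cc tw * a ^ (u * (jv + (tw.1.1 * s + tw.2.1))) := by
      intro jv cc
      have hsub : (∑ k ∈ Finset.range P,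
          (if h : k < P - 1 then cc (encDT s d P hs0 hds k h) else 0) * a ^ (u * (jv + k)))
          = ∑ k ∈ Finset.range (P - 1),
          (if h : k < P - 1 then cc (encDT s d P hs0 hds k h) else 0) * a ^ (u * (jv + k)) := by
        refine (Finset.sum_subset (Finset.range_subset_range.2 (by omega)) ?_).symm
        intro k hk hk2
        rw [dif_neg (by simp only [Finset.mem_range] at hk hk2 ⊢; omega)]
        exact zero_mul _
      rw [hsub]
      refine Finset.sum_bij' (fun k hk => encDT s d P hs0 hds k (Finset.mem_range.1 hk))
        (fun tw _ => tw.1.1 * s + tw.2.1) ?_ ?_ ?_ ?_ ?_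
      · intro k hk
        exact Finset.mem_univ _
      · intro tw _
        exact Finset.mem_range.2 (hbound tw.1 tw.2)
      · intro k hk
        show (encDT s d P hs0 hds k _).1.1 * s + (encDT s d P hs0 hds k _).2.1 = k
        exact Nat.div_add_mod' k s
      · intro tw _
        exact encEq tw.1 tw.2 _
      · intro k hk
        rw [dif_pos (Finset.mem_range.1 hk)]
        show cc (encDT s d P hs0 hds k _) * a ^ (u * (jv + k))
          = cc (encDT s d P hs0 hds k _) * a ^ (u * (jv + (k / s * s + k % s)))
        rw [Nat.div_add_mod' k s]
    -- the core vanishing statement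
    have core : ∀ j : Fin s, (∀ w', j.1 < w' → w' < s → dd w' = 0) → ∀ k < P,
        ((if h : k < P - 1 then
            c (some (j, (encDT s d P hs0 hds k h).1), (encDT s d P hs0 hds k h).2) else 0) +
          (if P - 1 ≤ j.1 + k then dd (j.1 + k - (P - 1)) else 0)) = 0 := by
      intro j hgt
      refine αLI' j.1 _ (fun k => add_mem (by split
                                              · exact hc _
                                              · exact zero_mem A)
                                          (by split
                                              · exact hddmem _
                                              · exact zero_mem A)) ?_
      -- ∑ = Cf j = 0
      have hsplit : (∑ k ∈ Finset.range P,
          ((if h : k < P - 1 then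
              c (some (j, (encDT s d P hs0 hds k h).1), (encDT s d P hs0 hds k h).2) else 0) +
            (if P - 1 ≤ j.1 + k then dd (j.1 + k - (P - 1)) else 0)) * a ^ (u * (j.1 + k)))
          = (∑ k ∈ Finset.range P,
              (if h : k < P - 1 then
                c (some (j, (encDT s d P hs0 hds k h).1), (encDT s d P hs0 hds k h).2) else 0) *
                a ^ (u * (j.1 + k))) +
            ∑ k ∈ Finset.range P,
              (if P - 1 ≤ j.1 + k then dd (j.1 + k - (P - 1)) else 0) * a ^ (u * (j.1 + k)) := by
        rw [← Finset.sum_add_distrib]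
        exact Finset.sum_congr rfl fun k _ => by rw [add_mul]
      rw [hsplit]
      have hfirst := part1 j.1 (fun tw => c (some (j, tw.1), tw.2))
      have hsecond : (∑ k ∈ Finset.range P,
          (if P - 1 ≤ j.1 + k then dd (j.1 + k - (P - 1)) else 0) * a ^ (u * (j.1 + k)))
          = ∑ w : Fin s, c (none, w) * a ^ (u * (P - 1 + w.1)) := by
        have hr1 : (∑ w : Fin s, c (none, w) * a ^ (u * (P - 1 + w.1)))
            = ∑ w ∈ Finset.range s, dd w * a ^ (u * (P - 1 + w)) := by
          rw [← Fin.sum_univ_eq_sum_range (fun w => dd w * a ^ (u * (P - 1 + w))) s]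
          exact Finset.sum_congr rfl fun w _ => by rw [noneEq w]
        rw [hr1]
        have hr2 : (∑ w ∈ Finset.range s, dd w * a ^ (u * (P - 1 + w)))
            = ∑ w ∈ Finset.range (j.1 + 1), dd w * a ^ (u * (P - 1 + w)) := by
          refine (Finset.sum_subset (Finset.range_subset_range.2 (by have := j.2; omega)) ?_).symm
          intro w hw hw2
          simp only [Finset.mem_range] at hw hw2
          rw [hgt w (by omega) hw, zero_mul]
        rw [hr2]
        have hr3 : (∑ k ∈ Finset.range P,
            (if P - 1 ≤ j.1 + k then dd (j.1 + k - (P - 1)) else 0) * a ^ (u * (j.1 + k)))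
            = ∑ k ∈ Finset.Ico (P - 1 - j.1) P,
              (if P - 1 ≤ j.1 + k then dd (j.1 + k - (P - 1)) else 0) * a ^ (u * (j.1 + k)) := by
          refine (Finset.sum_subset ?_ ?_).symm
          · intro k hk
            simp only [Finset.mem_Ico] at hk
            exact Finset.mem_range.2 hk.2
          · intro k hk hk2
            simp only [Finset.mem_range] at hk
            simp only [Finset.mem_Ico] at hk2
            have hj := j.2
            rw [if_neg (by omega), zero_mul]
        rw [hr3]
        refine Finset.sum_bij' (fun k _ => j.1 + k - (P - 1)) (fun w _ => P - 1 + w - j.1)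
          ?_ ?_ ?_ ?_ ?_
        · intro k hk
          simp only [Finset.mem_Ico] at hk
          have hj := j.2
          show j.1 + k - (P - 1) ∈ Finset.range (j.1 + 1)
          exact Finset.mem_range.2 (by omega)
        · intro w hw
          simp only [Finset.mem_range] at hw
          have hj := j.2
          show P - 1 + w - j.1 ∈ Finset.Ico (P - 1 - j.1) P
          exact Finset.mem_Ico.2 (by constructor <;> omega)
        · intro k hk
          simp only [Finset.mem_Ico] at hk
          have hj := j.2
          show P - 1 + (j.1 + k - (P - 1)) - j.1 = k
          omega
        · intro w hw
          simp only [Finset.mem_range] at hw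
          have hj := j.2
          show j.1 + (P - 1 + w - j.1) - (P - 1) = w
          omega
        · intro k hk
          simp only [Finset.mem_Ico] at hk
          have hj := j.2
          show (if P - 1 ≤ j.1 + k then dd (j.1 + k - (P - 1)) else 0) * a ^ (u * (j.1 + k))
            = dd (j.1 + k - (P - 1)) * a ^ (u * (P - 1 + (j.1 + k - (P - 1))))
          rw [if_pos (by omega)]
          have he : P - 1 + (j.1 + k - (P - 1)) = j.1 + k := by omega
          rw [he]
      have hCfj : Cf j = (∑ tw : Fin d × Fin s, c (some (j, tw.1), tw.2) *
          a ^ (u * (j.1 + (tw.1.1 * s + tw.2.1)))) +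
          ∑ w : Fin s, c (none, w) * a ^ (u * (P - 1 + w.1)) := by rw [hCf]
      rw [hfirst, hsecond, ← hCfj]
      exact hCzero j
    -- downward elimination of the exceptional coefficients
    have hdz : ∀ t, ∀ w, w < s → w + t + 1 = s → dd w = 0 := by
      intro t
      induction t using Nat.strong_induction_on with
      | _ t IH =>
        intro w hw hwt
        have hgt : ∀ w', w < w' → w' < s → dd w' = 0 := fun w' h1 h2 =>
          IH (s - w' - 1) (by omega) w' h2 (by omega)
        have hcore := core ⟨w, hw⟩ hgt (P - 1) (by omega)
        rw [dif_neg (by omega), if_pos (by omega)] at hcore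
        simpa using hcore
    have hdzero : ∀ w, w < s → dd w = 0 := fun w hw => hdz (s - w - 1) w hw (by omega)
    -- conclude
    rintro ⟨(_ | jt), w⟩
    · rw [← noneEq w]
      exact hdzero w.1 w.2
    · obtain ⟨j, t⟩ := jt
      have hk : t.1 * s + w.1 < P := by have := hbound t w; omega
      have hcore := core j (fun w' _ h2 => hdzero w' h2) (t.1 * s + w.1) hk
      rw [dif_pos (hbound t w), encEq t w (hbound t w)] at hcore
      by_cases hcond : P - 1 ≤ j.1 + (t.1 * s + w.1)
      · rw [if_pos hcond, hdzero _ (by have := hbound t w; have hj := j.2; omega)] at hcore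
        simpa using hcore
      · rw [if_neg hcond] at hcore
        simpa using hcore
  exact ⟨hLI, hSP⟩

end Step
def prodPiEquiv {n : ℕ} (Aty Bty : Fin n → Type*) :
    ((∀ e, Aty e) × (∀ e, Bty e)) ≃ (∀ e, Aty e × Bty e) where
  toFun f e := (f.1 e, f.2 e)
  invFun g := (fun e => (g e).1, fun e => (g e).2)
  left_inv f := rfl
  right_inv g := rfl

/-- **Product basis used in the proof of Theorem 4.**
With the field tower of Lemma 1 (here `Kf e` plays the role of `F_e`), where
`{1, α_e^u, …, α_e^{u(p_e−1)}}` is a `K_{e−1}`-basis of `F_e` and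
`{1, β_e, …, β_e^{s̄−1}}` is an `F_e`-basis of `K_e`, define for each `e` the set
`E_e = {β_e^j α_e^{u(j+t·s̄)} : 0 ≤ j < s̄, 0 ≤ t < (p_e−1)/s̄} ∪ {α_e^{u(p_e−1)} ∑_{j<s̄} β_e^j}`,
whose elements are encoded by `Option (Fin s̄ × Fin ((p_e−1)/s̄))` (`none` encoding
the exceptional element).  Then the family
`(∏_e ξ_e) · (∏_e α_e^{u·w_e})`, for `ξ_e ∈ E_e` and `0 ≤ w_e ≤ s̄−1`, is an
`F`-basis of `K = K_n̄` (in particular its `s̄^n̄ ∏_e p_e` listed elements are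
pairwise distinct and `F`-linearly independent). -/
theorem product_basis_theorem4
    (F Ω : Type*) [Field F] [Fintype F] [Field Ω] [IsAlgClosed Ω] [Algebra F Ω]
    (q nb sb u : ℕ) (hq : Fintype.card F = q) (hsb : 1 ≤ sb) (hu : 0 < u)
    (p : ℕ → ℕ)
    (hp : ∀ e ∈ Finset.Icc 1 nb, (p e).Prime)
    (hpdistinct : ∀ e ∈ Finset.Icc 1 nb, ∀ e' ∈ Finset.Icc 1 nb, e ≠ e' → p e ≠ p e')
    (hpmod : ∀ e ∈ Finset.Icc 1 nb, sb ∣ (p e - 1))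
    (α β : ℕ → Ω)
    (K Kf : ℕ → IntermediateField F Ω)
    (hK0 : K 0 = ⊥)
    (hKf : ∀ e ∈ Finset.Icc 1 nb,
      Kf e = K (e - 1) ⊔ IntermediateField.adjoin F {α e})
    (hK : ∀ e ∈ Finset.Icc 1 nb,
      K e = Kf e ⊔ IntermediateField.adjoin F {β e})
    (hαbasis : ∀ e ∈ Finset.Icc 1 nb,
      (∀ c : Fin (p e) → Ω, (∀ i, c i ∈ K (e - 1)) →
        ∑ i, c i * (α e) ^ (u * i.1) = 0 → ∀ i, c i = 0) ∧
      (∀ x ∈ Kf e, ∃ c : Fin (p e) → Ω, (∀ i, c i ∈ K (e - 1)) ∧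
        x = ∑ i, c i * (α e) ^ (u * i.1)))
    (hβbasis : ∀ e ∈ Finset.Icc 1 nb,
      (∀ c : Fin sb → Ω, (∀ i, c i ∈ Kf e) →
        ∑ i, c i * (β e) ^ i.1 = 0 → ∀ i, c i = 0) ∧
      (∀ x ∈ K e, ∃ c : Fin sb → Ω, (∀ i, c i ∈ Kf e) ∧
        x = ∑ i, c i * (β e) ^ i.1))
    (fam : (((e : Fin nb) → Option (Fin sb × Fin ((p (e.1 + 1) - 1) / sb)))
      × (Fin nb → Fin sb)) → Ω)
    (hfam : ∀ ξw, fam ξw =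
      (∏ e : Fin nb,
        (ξw.1 e).elim
          ((α (e.1 + 1)) ^ (u * (p (e.1 + 1) - 1)) *
            ∑ j ∈ Finset.range sb, (β (e.1 + 1)) ^ j)
          (fun jt => (β (e.1 + 1)) ^ (jt.1.1) *
            (α (e.1 + 1)) ^ (u * (jt.1.1 + jt.2.1 * sb)))) *
      ∏ e : Fin nb, (α (e.1 + 1)) ^ (u * (ξw.2 e).1)) :
    LinearIndependent F fam ∧
      (Submodule.span F (Set.range fam) : Set Ω) = (K nb : Set Ω) := by
  classical
  -- basic memberships along the tower
  have hmemIcc : ∀ e < nb, e + 1 ∈ Finset.Icc 1 nb := fun e he =>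
    Finset.mem_Icc.2 ⟨by omega, by omega⟩
  have haKf : ∀ e < nb, α (e + 1) ∈ Kf (e + 1) := by
    intro e he
    rw [hKf _ (hmemIcc e he)]
    exact (le_sup_right : IntermediateField.adjoin F {α (e + 1)} ≤ _)
      (IntermediateField.mem_adjoin_simple_self F (α (e + 1)))
  have hbK : ∀ e < nb, β (e + 1) ∈ K (e + 1) := by
    intro e he
    rw [hK _ (hmemIcc e he)]
    exact (le_sup_right : IntermediateField.adjoin F {β (e + 1)} ≤ _)
      (IntermediateField.mem_adjoin_simple_self F (β (e + 1)))
  have hAF : ∀ e < nb, K e ≤ Kf (e + 1) := by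
    intro e he
    have h := hKf _ (hmemIcc e he)
    rw [h]
    exact le_sup_left
  have hFK : ∀ e < nb, Kf (e + 1) ≤ K (e + 1) := by
    intro e he
    rw [hK _ (hmemIcc e he)]
    exact le_sup_left
  have hmono : ∀ e < nb, K e ≤ K (e + 1) := fun e he => le_trans (hAF e he) (hFK e he)
  have haK : ∀ e < nb, α (e + 1) ∈ K (e + 1) := fun e he => hFK e he (haKf e he)
  -- per-step bases
  have hstep : ∀ e < nb,
      LIf (K e) (stepFam (p (e + 1)) sb u (α (e + 1)) (β (e + 1))) ∧
      SPf (K e) (K (e + 1)) (stepFam (p (e + 1)) sb u (α (e + 1)) (β (e + 1))) := by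
    intro e he
    have hαb := hαbasis _ (hmemIcc e he)
    have hβb := hβbasis _ (hmemIcc e he)
    exact step_basis (K e) (Kf (e + 1)) (K (e + 1)) (p (e + 1)) sb u
      (hp _ (hmemIcc e he)).two_le hsb (hpmod _ (hmemIcc e he)) hu
      (α (e + 1)) (β (e + 1)) (haKf e he) (hbK e he) (hAF e he) (hFK e he)
      hαb.1 hαb.2 hβb.1 hβb.2
  have hmemg : ∀ e < nb, ∀ i, stepFam (p (e + 1)) sb u (α (e + 1)) (β (e + 1)) i ∈ K (e + 1) := by
    intro e he i
    obtain ⟨ξ, w⟩ := i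
    have ha' := haK e he
    have hb' := hbK e he
    cases ξ with
    | none =>
      exact mul_mem (mul_mem (pow_mem ha' _) (sum_mem fun j _ => pow_mem hb' _)) (pow_mem ha' _)
    | some jt =>
      exact mul_mem (mul_mem (pow_mem hb' _) (pow_mem ha' _)) (pow_mem ha' _)
  obtain ⟨chLI, chSP⟩ := LIf_SPf_chain nb
    (fun e => Option (Fin sb × Fin ((p e - 1) / sb)) × Fin sb)
    (fun e => stepFam (p e) sb u (α e) (β e)) K hmono
    (fun e he => (hstep e he).1) (fun e he => (hstep e he).2) hmemg
  -- identify fam with the chain family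
  have hfameq : fam = (fun f : (e : Fin nb) →
        (Option (Fin sb × Fin ((p (e.1 + 1) - 1) / sb)) × Fin sb) =>
        ∏ e, stepFam (p (e.1 + 1)) sb u (α (e.1 + 1)) (β (e.1 + 1)) (f e)) ∘
      (prodPiEquiv (fun e : Fin nb => Option (Fin sb × Fin ((p (e.1 + 1) - 1) / sb)))
        (fun _ : Fin nb => Fin sb)) := by
    funext ξw
    rw [hfam ξw]
    show _ = ∏ e : Fin nb, stepFam (p (e.1 + 1)) sb u (α (e.1 + 1)) (β (e.1 + 1)) (ξw.1 e, ξw.2 e)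
    rw [← Finset.prod_mul_distrib]
    rfl
  have famLI : LIf (K 0) fam := by
    rw [hfameq]
    exact LIf_comp_equiv chLI _
  have famSP : SPf (K 0) (K nb) fam := by
    rw [hfameq]
    exact SPf_comp_equiv chSP _
  constructor
  · rw [Fintype.linearIndependent_iff]
    intro gg hgg i
    have hsum0 : ∑ i, algebraMap F Ω (gg i) * fam i = 0 := by
      rw [← hgg]
      exact Finset.sum_congr rfl fun i _ => (Algebra.smul_def _ _).symm
    have h0 := famLI (fun i => algebraMap F Ω (gg i))
      (fun i => by rw [hK0]; exact IntermediateField.mem_bot.2 ⟨gg i, rfl⟩) hsum0 i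
    have := (algebraMap F Ω).injective (by rw [h0, map_zero] : algebraMap F Ω (gg i) = algebraMap F Ω 0)
    exact this
  · apply Set.Subset.antisymm
    · intro x hx
      have hfm : ∀ i, fam i ∈ K nb := by
        intro i
        rw [hfam i]
        refine mul_mem (prod_mem fun e _ => ?_) (prod_mem fun e _ => ?_)
        · have ha' : α (e.1 + 1) ∈ K nb :=
            chain_mono K nb hmono nb le_rfl (e.1 + 1) (by omega) (haK e.1 e.2)
          have hb' : β (e.1 + 1) ∈ K nb :=
            chain_mono K nb hmono nb le_rfl (e.1 + 1) (by omega) (hbK e.1 e.2)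
          cases (i.1 e) with
          | none => exact mul_mem (pow_mem ha' _) (sum_mem fun j _ => pow_mem hb' _)
          | some jt => exact mul_mem (pow_mem hb' _) (pow_mem ha' _)
        · exact pow_mem (chain_mono K nb hmono nb le_rfl (e.1 + 1) (by omega) (haK e.1 e.2)) _
      have hle : Submodule.span F (Set.range fam) ≤
          Subalgebra.toSubmodule (K nb).toSubalgebra := by
        rw [Submodule.span_le]
        rintro y ⟨i, rfl⟩
        exact hfm i
      exact hle hx
    · intro x hx
      obtain ⟨c, hc, hxe⟩ := famSP x hx
      have hc' : ∀ i, ∃ y : F, algebraMap F Ω y = c i := by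
        intro i
        have := hc i
        rw [hK0] at this
        exact IntermediateField.mem_bot.1 this
      choose y hy using hc'
      have : x = ∑ i, y i • fam i := by
        rw [hxe]
        exact Finset.sum_congr rfl fun i _ => by rw [Algebra.smul_def, hy i]
      rw [this]
      exact Submodule.sum_mem _ fun i _ =>
        Submodule.smul_mem _ _ (Submodule.subset_span (Set.mem_range_self i))
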